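/- With $q_r = \mathbbm{p}(m = r \mid \cdot)$ denoting the normalized full conditional $q_r \propto \frac{\prod_{j=1}^{k_n-1}(r-j)}{(1+r)_{n-1}} \frac{\hat\gamma(1-\hat\gamma)_{r-1}}{r!}$ for $r \geq k_n$, the following recursion holds: $q_{r+1} = q_r \cdot \frac{r(r - \hat\gamma)}{(r - k_n + 1)(r + n)}$ for all $r \geq k_n$, and the initial value satisfies $q_{k_n} = \frac{\prod_{j=1}^{k_n}(\hat\gamma + n - j)}{\prod_{j=1}^{k_n}(n - 1 + j)}$. -/

import Mathlib

open Finset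

lemma auxIcc (f : ℕ → ℝ) (m : ℕ) : ∏ j ∈ Icc 1 m, f j = ∏ i ∈ range m, f (1 + i) := by
  rw [← Finset.Ico_add_one_right_eq_Icc, Finset.prod_Ico_eq_prod_range]
  simp

lemma aux1 (x : ℝ) (m : ℕ) :
    (∏ j ∈ Icc 1 m, (x + 1 - j)) * (x - m) = (∏ j ∈ Icc 1 m, (x - j)) * x := by
  induction m with
  | zero => simp
  | succ m ih =>
      rw [Finset.prod_Icc_succ_top (Nat.succ_le_succ (Nat.zero_le m)),
        Finset.prod_Icc_succ_top (Nat.succ_le_succ (Nat.zero_le m))]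
      push_cast
      have : (∏ j ∈ Icc 1 m, (x + 1 - j)) * (x - m) * ((x + 1 - (m+1)) * (x - (m+1)))
          = (∏ j ∈ Icc 1 m, (x - j)) * x * ((x + 1 - (m+1)) * (x - (m+1))) := by
        rw [ih]
      push_cast at this
      nlinarith [this]

lemma aux3 (x : ℝ) (m : ℕ) :
    (∏ i ∈ range m, (x + 1 + i)) * x = ∏ i ∈ range (m + 1), (x + i) := by
  rw [Finset.prod_range_succ']
  push_cast
  ring_nf

lemma aux2 (x : ℝ) (m : ℕ) :
    (∏ i ∈ range m, (x + 1 + i)) * x = (∏ i ∈ range m, (x + i)) * (x + m) := by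
  rw [aux3, Finset.prod_range_succ]

lemma aux4 (a b : ℕ) :
    (∏ i ∈ range b, ((a : ℝ) + 1 + i)) * (a.factorial : ℝ) = ((a + b).factorial : ℝ) := by
  induction b with
  | zero => simp
  | succ b ih =>
      rw [Finset.prod_range_succ]
      have : (∏ i ∈ range b, ((a : ℝ) + 1 + i)) * ((a:ℝ) + 1 + b) * a.factorial
          = ((a+b).factorial : ℝ) * ((a:ℝ)+1+b) := by rw [← ih]; ring
      rw [this]
      have h2 : (a + (b+1)).factorial = (a + b + 1) * (a+b).factorial := by
        rw [show a + (b+1) = (a+b)+1 by ring, Nat.factorial_succ]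
      rw [h2]
      push_cast
      ring

lemma aux5 (m : ℕ) : ∏ i ∈ range m, ((m : ℝ) - i) = (m.factorial : ℝ) := by
  have := Finset.prod_range_reflect (fun i => ((m : ℝ) - i)) m
  rw [← this]
  have h1 : ∏ j ∈ range m, ((m:ℝ) - ((m - 1 - j : ℕ) : ℝ)) = ∏ j ∈ range m, ((j : ℝ) + 1) := by
    apply Finset.prod_congr rfl
    intro j hj
    simp only [Finset.mem_range] at hj
    have : ((m - 1 - j : ℕ) : ℝ) = (m : ℝ) - 1 - j := by
      have : m - 1 - j = m - (1 + j) := by omega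
      rw [this]
      push_cast [Nat.cast_sub (by omega : 1 + j ≤ m)]
      ring
    rw [this]; ring
  rw [show (∏ j ∈ range m, ((m:ℝ) - ((m - 1 - j : ℕ) : ℝ))) = ∏ j ∈ range m, ((j : ℝ) + 1) from h1]
  rw [show (∏ j ∈ range m, ((j : ℝ) + 1)) = ((∏ j ∈ range m, (j+1) : ℕ) : ℝ) by push_cast; rfl]
  norm_cast
  exact Finset.prod_range_add_one_eq_factorial m

theorem gnedin_conditional_recursion
    (n k : ℕ) (hk : 1 ≤ k) (hkn : k ≤ n) (γ : ℝ) (hγ0 : 0 < γ) (hγ1 : γ < 1)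
    (q : ℕ → ℝ)
    (hq : ∀ r, k ≤ r → q r =
      ((∏ j ∈ Finset.Icc 1 (k - 1), ((r : ℝ) - j)) /
            (∏ i ∈ Finset.range (n - 1), (1 + (r : ℝ) + i)) *
          (γ * ∏ i ∈ Finset.range (r - 1), (1 - γ + i)) / (Nat.factorial r : ℝ)) /
        ((Nat.factorial (k - 1) : ℝ) * (∏ i ∈ Finset.range (k - 1), (1 - γ + i)) *
            (∏ i ∈ Finset.range (n - k), (γ + i)) /
          ((Nat.factorial (n - 1) : ℝ) * ∏ i ∈ Finset.range (n - 1), (1 + γ + i)))) :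
    (∀ r, k ≤ r →
        q (r + 1) = q r * ((r : ℝ) * ((r : ℝ) - γ)) /
          (((r : ℝ) - k + 1) * ((r : ℝ) + n)))
    ∧ q k = (∏ j ∈ Finset.Icc 1 k, (γ + (n : ℝ) - j)) /
        ∏ j ∈ Finset.Icc 1 k, ((n : ℝ) - 1 + j) := by
  have hn1 : 1 ≤ n := le_trans hk hkn
  have hck : ((k - 1 : ℕ) : ℝ) = (k : ℝ) - 1 := by
    rw [Nat.cast_sub hk, Nat.cast_one]
  have hcn : ((n - 1 : ℕ) : ℝ) = (n : ℝ) - 1 := by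
    rw [Nat.cast_sub hn1, Nat.cast_one]
  have hγ1' : (0:ℝ) < 1 - γ := by linarith
  have hD2 : (0:ℝ) < ∏ i ∈ Finset.range (k - 1), (1 - γ + (i:ℝ)) :=
    Finset.prod_pos fun i _ => by have : (0:ℝ) ≤ i := Nat.cast_nonneg i; linarith
  have hD3 : (0:ℝ) < ∏ i ∈ Finset.range (n - k), (γ + (i:ℝ)) :=
    Finset.prod_pos fun i _ => by have : (0:ℝ) ≤ i := Nat.cast_nonneg i; linarith
  have hD5 : (0:ℝ) < ∏ i ∈ Finset.range (n - 1), (1 + γ + (i:ℝ)) :=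
    Finset.prod_pos fun i _ => by have : (0:ℝ) ≤ i := Nat.cast_nonneg i; linarith
  have hD1 : ((k-1).factorial : ℝ) ≠ 0 := Nat.cast_ne_zero.mpr (Nat.factorial_ne_zero _)
  have hD4 : ((n-1).factorial : ℝ) ≠ 0 := Nat.cast_ne_zero.mpr (Nat.factorial_ne_zero _)
  constructor
  · intro r hr
    have hrk : (k:ℝ) ≤ r := by exact_mod_cast hr
    have hk1 : (1:ℝ) ≤ k := by exact_mod_cast hk
    have hnn : (1:ℝ) ≤ n := by exact_mod_cast hn1
    have h1 : (0:ℝ) < (r:ℝ) - k + 1 := by linarith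
    have h2 : (0:ℝ) < (r:ℝ) + 1 := by positivity
    have h3 : (0:ℝ) < (r:ℝ) + n := by linarith
    have hB : (0:ℝ) < ∏ i ∈ Finset.range (n - 1), (1 + (r:ℝ) + i) :=
      Finset.prod_pos fun i _ => by positivity
    have hF : ((r).factorial : ℝ) ≠ 0 := Nat.cast_ne_zero.mpr (Nat.factorial_ne_zero _)
    rw [hq (r+1) (by omega), hq r hr]
    simp only [Nat.add_sub_cancel]
    push_cast [Nat.factorial_succ]
    have E1 : (∏ x ∈ Finset.Icc 1 (k - 1), ((r:ℝ) + 1 - x))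
        = (∏ j ∈ Finset.Icc 1 (k - 1), ((r:ℝ) - j)) * r / ((r:ℝ) - k + 1) := by
      rw [eq_div_iff h1.ne']
      have h := aux1 (r:ℝ) (k-1)
      rw [hck] at h
      linear_combination h
    have E2 : (∏ x ∈ Finset.range (n - 1), (1 + ((r:ℝ) + 1) + x))
        = (∏ i ∈ Finset.range (n - 1), (1 + (r:ℝ) + i)) * ((r:ℝ) + n) / ((r:ℝ) + 1) := by
      rw [eq_div_iff h2.ne']
      have h := aux2 (1 + (r:ℝ)) (n-1)
      rw [hcn] at h
      have e : (∏ x ∈ Finset.range (n - 1), (1 + ((r:ℝ) + 1) + x))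
          = ∏ i ∈ Finset.range (n - 1), (1 + (r:ℝ) + 1 + i) :=
        Finset.prod_congr rfl fun i _ => by ring
      rw [e]
      linear_combination h
    have E3 : (∏ x ∈ Finset.range r, (1 - γ + (x:ℝ)))
        = (∏ x ∈ Finset.range (r - 1), (1 - γ + (x:ℝ))) * ((r:ℝ) - γ) := by
      conv_lhs => rw [show r = (r-1)+1 by omega]
      rw [Finset.prod_range_succ]
      have : ((r - 1 : ℕ) : ℝ) = (r : ℝ) - 1 := by
        rw [Nat.cast_sub (le_trans hk hr), Nat.cast_one]
      rw [this]
      ring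
    rw [E1, E2, E3]
    field_simp
  · rw [hq k le_rfl]
    have hkk : (1:ℝ) ≤ k := by exact_mod_cast hk
    have hnn : (1:ℝ) ≤ n := by exact_mod_cast hn1
    have hBk : (0:ℝ) < ∏ i ∈ Finset.range (n - 1), (1 + (k:ℝ) + i) :=
      Finset.prod_pos fun i _ => by positivity
    have hFk : ((k).factorial : ℝ) ≠ 0 := Nat.cast_ne_zero.mpr (Nat.factorial_ne_zero _)
    have hS : (0:ℝ) < ∏ j ∈ Finset.Icc 1 k, ((n:ℝ) - 1 + j) :=
      Finset.prod_pos fun j hj => by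
        have h1j : (1:ℝ) ≤ j := by exact_mod_cast (Finset.mem_Icc.mp hj).1
        linarith
    have hT : (0:ℝ) < ∏ j ∈ Finset.Icc 1 k, (γ + (n:ℝ) - j) :=
      Finset.prod_pos fun j hj => by
        have hj' : j ≤ n := le_trans (Finset.mem_Icc.mp hj).2 hkn
        have : (j:ℝ) ≤ n := by exact_mod_cast hj'
        linarith
    -- R1
    have R1 : (∏ j ∈ Finset.Icc 1 (k - 1), ((k:ℝ) - j)) = ((k-1).factorial : ℝ) := by
      rw [auxIcc (fun j => (k:ℝ) - j) (k-1)]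
      have e : (∏ i ∈ Finset.range (k-1), ((k:ℝ) - (1+i))) =
          ∏ i ∈ Finset.range (k-1), (((k-1:ℕ):ℝ) - i) :=
        Finset.prod_congr rfl fun i _ => by rw [hck]; push_cast; ring
      simpa [e] using aux5 (k-1)
    -- R2 : B_k * k! = (n-1)! * S
    have R2 : (∏ i ∈ Finset.range (n - 1), (1 + (k:ℝ) + i)) * (k.factorial : ℝ)
        = ((n-1).factorial : ℝ) * ∏ j ∈ Finset.Icc 1 k, ((n:ℝ) - 1 + j) := by
      have e1 : (∏ i ∈ Finset.range (n - 1), (1 + (k:ℝ) + i)) =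
          ∏ i ∈ Finset.range (n - 1), ((k:ℝ) + 1 + i) :=
        Finset.prod_congr rfl fun i _ => by ring
      have e2 : (∏ j ∈ Finset.Icc 1 k, ((n:ℝ) - 1 + j)) =
          ∏ i ∈ Finset.range k, (((n-1:ℕ):ℝ) + 1 + i) := by
        rw [auxIcc (fun j => (n:ℝ) - 1 + j) k]
        exact Finset.prod_congr rfl fun i _ => by rw [hcn]; push_cast; ring
      rw [e1, e2, aux4 k (n-1)]
      have := aux4 (n-1) k
      rw [show (n-1) + k = k + (n-1) by omega] at this
      linarith [this]
    -- R3 : γ * D5 = D3 * T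
    have R3 : γ * (∏ i ∈ Finset.range (n - 1), (1 + γ + (i:ℝ)))
        = (∏ i ∈ Finset.range (n - k), (γ + (i:ℝ)))
          * ∏ j ∈ Finset.Icc 1 k, (γ + (n:ℝ) - j) := by
      have e1 : (∏ i ∈ Finset.range (n - 1), (1 + γ + (i:ℝ))) =
          ∏ i ∈ Finset.range (n - 1), (γ + 1 + (i:ℝ)) :=
        Finset.prod_congr rfl fun i _ => by ring
      have h := aux3 γ (n-1)
      rw [show (n-1) + 1 = n by omega] at h
      have e3 : (∏ i ∈ Finset.range n, (γ + (i:ℝ)))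
          = (∏ i ∈ Finset.range (n - k), (γ + (i:ℝ)))
            * ∏ i ∈ Finset.range k, (γ + ((n - k + i : ℕ):ℝ)) := by
        conv_lhs => rw [show n = (n-k)+k by omega]
        rw [Finset.prod_range_add]
      have e4 : (∏ j ∈ Finset.Icc 1 k, (γ + (n:ℝ) - j))
          = ∏ i ∈ Finset.range k, (γ + ((n - k + i : ℕ):ℝ)) := by
        rw [auxIcc (fun j => γ + (n:ℝ) - j) k]
        rw [← Finset.prod_range_reflect (fun i => γ + ((n - k + i : ℕ):ℝ)) k]
        apply Finset.prod_congr rfl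
        intro i hi
        simp only [Finset.mem_range] at hi
        have h5 : n - k + (k - 1 - i) = n - (1 + i) := by omega
        rw [h5]
        have h6 : ((n - (1+i) : ℕ):ℝ) = (n:ℝ) - (1 + i) := by
          rw [Nat.cast_sub (by omega : 1 + i ≤ n)]; push_cast; ring
        rw [h6]
        push_cast
        ring
      rw [e1]
      linear_combination h + e3 - (∏ i ∈ Finset.range (n - k), (γ + (i:ℝ))) * e4
    rw [R1]
    rw [eq_div_iff hS.ne']
    field_simp
    linear_combination ((∏ j ∈ Finset.Icc 1 k, ((n:ℝ) - 1 + j)) * ((n-1).factorial : ℝ)) * R3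
      - ((∏ i ∈ Finset.range (n - k), (γ + (i:ℝ)))
        * (∏ j ∈ Finset.Icc 1 k, (γ + (n:ℝ) - j))) * R2
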